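/- Let 0 < α ≤ 2 and s ∈ ℂ∖{0} with arg s ∈ [(1-α)π, π] when α ≤ 1, or arg s ∈ [0, (2-α)π] when α > 1 (admissibility). Then the function z ↦ (1 - (1 - s(-1/z)^α)^{1/r})/s, defined on ℂ₊ with branches (-1/z)^α = e^{α log z'} where log has imaginary part in (0,2π) applied to -1/z, and w^{1/r} principal with r ≥ 1, maps ℂ₊ into the open sector {w ∈ ℂ∖{0} : 0 < arg w < απ}. -/

import Mathlib

open Real Complex

lemma myArg {z : ℂ} (hz : 0 < z.im) :
    Complex.arg z = π/2 - Real.arctan (z.re / z.im) := by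
  have hz0 : z ≠ 0 := by
    intro h; rw [h] at hz; simp at hz
  have him : z.im ≠ 0 := hz.ne'
  have habs : 0 < ‖z‖ := norm_pos_iff.mpr hz0
  have h1 : Real.cos (Complex.arg z) = z.re / ‖z‖ := Complex.cos_arg hz0
  have hsq : Real.sqrt (1 + (z.re/z.im)^2) = ‖z‖ / z.im := by
    rw [show 1 + (z.re/z.im)^2 = (‖z‖ / z.im)^2 by
      field_simp
      rw [Complex.sq_norm, Complex.normSq_apply]; ring]
    exact Real.sqrt_sq (by positivity)
  have h2 : Real.cos (π/2 - Real.arctan (z.re/z.im)) = z.re / ‖z‖ := by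
    rw [Real.cos_pi_div_two_sub, Real.sin_arctan]
    rw [show (1 + (z.re/z.im)^2) = 1 + (z.re/z.im)^2 from rfl]
    rw [hsq]
    field_simp
  have harc1 := Real.arctan_lt_pi_div_two (z.re/z.im)
  have harc2 := Real.neg_pi_div_two_lt_arctan (z.re/z.im)
  have hpi := Real.pi_pos
  refine Real.injOn_cos ⟨Complex.arg_nonneg_iff.mpr hz.le, Complex.arg_le_pi z⟩
    ⟨by linarith, by linarith⟩ (h1.trans h2.symm)

lemma argBounds {z : ℂ} (hz : 0 < z.im) : 0 < Complex.arg z ∧ Complex.arg z < π := by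
  rw [myArg hz]
  have harc1 := Real.arctan_lt_pi_div_two (z.re/z.im)
  have harc2 := Real.neg_pi_div_two_lt_arctan (z.re/z.im)
  constructor <;> linarith

lemma argle {A B : ℂ} (hA : 0 < A.im) (hB : 0 < B.im)
    (h : (A * (starRingEnd ℂ) B).im ≤ 0) : Complex.arg A ≤ Complex.arg B := by
  have h' : A.im * B.re - A.re * B.im ≤ 0 := by
    have := h
    simp only [Complex.mul_im, Complex.conj_re, Complex.conj_im] at this
    linarith
  rw [myArg hA, myArg hB]
  have hdiv : B.re / B.im ≤ A.re / A.im := by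
    rw [div_le_div_iff₀ hB hA]; nlinarith
  have := Real.arctan_strictMono.monotone hdiv
  linarith

lemma argConj {X : ℂ} (hX : X.im ≠ 0) :
    Complex.arg ((starRingEnd ℂ) X) = - Complex.arg X := by
  rw [Complex.arg_conj, if_neg]
  intro h
  exact hX (Complex.arg_eq_pi_iff.mp h).2

lemma polar_arg {c β : ℝ} (hc : 0 < c) (h1 : -π < β) (h2 : β ≤ π) :
    Complex.arg ((c:ℂ) * Complex.exp ((β:ℂ) * I)) = β := by
  rw [Complex.arg_real_mul _ hc, Complex.exp_mul_I]
  exact Complex.arg_cos_add_sin_mul_I ⟨h1, h2⟩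

lemma polar_im (c β : ℝ) : (((c:ℂ)) * Complex.exp ((β:ℂ) * I)).im = c * Real.sin β := by
  rw [Complex.im_ofReal_mul, Complex.exp_ofReal_mul_I_im]

lemma polar_re (c β : ℝ) : (((c:ℂ)) * Complex.exp ((β:ℂ) * I)).re = c * Real.cos β := by
  rw [Complex.re_ofReal_mul, Complex.exp_ofReal_mul_I_re]

lemma intInt_im {f : ℝ → ℂ} {a b : ℝ}
    (hf : IntervalIntegrable f MeasureTheory.volume a b) :
    (∫ t in a..b, f t).im = ∫ t in a..b, (f t).im := by
  have := Complex.imCLM.intervalIntegral_comp_comm hf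
  simpa using this.symm

lemma spiral {v : ℂ} (hv : 0 < v.im) {ρ : ℝ} (h0 : 0 < ρ) (h1 : ρ ≤ 1) :
    ((v ^ ((ρ:ℝ):ℂ) - 1) * (starRingEnd ℂ) (v - 1)).im ≤ 0 := by
  have hv0 : v ≠ 0 := by intro h; rw [h] at hv; simp at hv
  set c := Complex.log v with hc
  have hγ : 0 < c.im ∧ c.im < π := by rw [hc, Complex.log_im]; exact argBounds hv
  have hcne : c ≠ 0 := by
    intro h; rw [h] at hγ; simp at hγ
  set f : ℝ → ℂ := fun t => Complex.exp (c * t) with hf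
  have hcont : Continuous f := by fun_prop
  have hint : ∀ a b : ℝ, IntervalIntegrable f MeasureTheory.volume a b :=
    fun a b => hcont.intervalIntegrable a b
  have key : ∀ a b : ℝ, (∫ t in a..b, f t) = (Complex.exp (c*b) - Complex.exp (c*a))/c :=
    fun a b => integral_exp_mul_complex hcne
  set Iρ := ∫ t in (0:ℝ)..ρ, f t with hIrho
  set J := ∫ t in ρ..(1:ℝ), f t with hJdef
  have hIρ : c * Iρ = v ^ ((ρ:ℝ):ℂ) - 1 := by
    rw [hIrho, key]
    rw [Complex.cpow_def_of_ne_zero hv0, ← hc, mul_comm c ((ρ:ℝ):ℂ)]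
    field_simp
    simp
  have hI1 : c * (Iρ + J) = v - 1 := by
    rw [hIrho, hJdef, intervalIntegral.integral_add_adjacent_intervals (hint 0 ρ) (hint ρ 1),
      key]
    push_cast
    rw [mul_one, mul_zero, Complex.exp_zero, Complex.exp_log hv0]
    field_simp
  have himJ : ∀ t ∈ Set.Icc (0:ℝ) ρ, (f t * (starRingEnd ℂ) J).im ≤ 0 := by
    intro t ht
    have e1 : f t * (starRingEnd ℂ) J = (starRingEnd ℂ) ((starRingEnd ℂ) (f t) * J) := by
      rw [map_mul, Complex.conj_conj]
    rw [e1, Complex.conj_im, neg_nonpos]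
    have e2 : (starRingEnd ℂ) (f t) * J = ∫ u in ρ..(1:ℝ), (starRingEnd ℂ) (f t) * f u := by
      rw [intervalIntegral.integral_const_mul]
    rw [e2]
    have e3 : (∫ u in ρ..(1:ℝ), (starRingEnd ℂ) (f t) * f u).im
        = ∫ u in ρ..(1:ℝ), ((starRingEnd ℂ) (f t) * f u).im := by
      exact intInt_im ((continuous_const.mul hcont).intervalIntegrable ρ 1)
    rw [e3]
    apply intervalIntegral.integral_nonneg (by linarith [ht.2] : ρ ≤ (1:ℝ))
    intro u hu
    have e4 : (starRingEnd ℂ) (f t) * f u = Complex.exp ((starRingEnd ℂ) c * t + c * u) := by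
      rw [hf]
      simp only []
      rw [← Complex.exp_conj, ← Complex.exp_add, map_mul, Complex.conj_ofReal]
    rw [e4, Complex.exp_im]
    apply mul_nonneg (Real.exp_pos _).le
    have hre : ((starRingEnd ℂ) c * ↑t + c * ↑u).im = c.im * (u - t) := by
      simp [Complex.add_im, Complex.mul_im, Complex.conj_im, Complex.conj_re,
        Complex.ofReal_re, Complex.ofReal_im]
      ring
    rw [hre]
    apply Real.sin_nonneg_of_nonneg_of_le_pi
    · have : t ≤ u := le_trans ht.2 hu.1
      nlinarith [hγ.1]
    · have h1' : u - t ≤ 1 := by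
        have := hu.2; have := ht.1; linarith
      have h2' : 0 ≤ u - t := by have := le_trans ht.2 hu.1; linarith
      nlinarith [hγ.1, hγ.2]
  have main : (Iρ * (starRingEnd ℂ) J).im ≤ 0 := by
    have e1 : Iρ * (starRingEnd ℂ) J = ∫ t in (0:ℝ)..ρ, f t * (starRingEnd ℂ) J := by
      rw [intervalIntegral.integral_mul_const]
    rw [e1]
    have e2 : (∫ t in (0:ℝ)..ρ, f t * (starRingEnd ℂ) J).im
        = ∫ t in (0:ℝ)..ρ, (f t * (starRingEnd ℂ) J).im := by
      exact intInt_im ((hcont.mul continuous_const).intervalIntegrable 0 ρ)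
    rw [e2, ← neg_nonneg, ← intervalIntegral.integral_neg]
    apply intervalIntegral.integral_nonneg h0.le
    intro t ht
    simpa using himJ t ht
  calc ((v ^ ((ρ:ℝ):ℂ) - 1) * (starRingEnd ℂ) (v - 1)).im
      = ((c * Iρ) * (starRingEnd ℂ) (c * (Iρ + J))).im := by rw [hIρ, hI1]
    _ = ((c * (starRingEnd ℂ) c) * (Iρ * (starRingEnd ℂ) (Iρ + J))).im := by
        rw [map_mul]; ring_nf
    _ = Complex.normSq c * (Iρ * (starRingEnd ℂ) (Iρ + J)).im := by
        rw [Complex.mul_conj, Complex.im_ofReal_mul]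
    _ = Complex.normSq c * ((Iρ * (starRingEnd ℂ) Iρ).im + (Iρ * (starRingEnd ℂ) J).im) := by
        rw [map_add, mul_add, Complex.add_im]
    _ = Complex.normSq c * (Iρ * (starRingEnd ℂ) J).im := by
        rw [Complex.mul_conj]; simp
    _ ≤ 0 := mul_nonpos_of_nonneg_of_nonpos (Complex.normSq_nonneg c) main

lemma cpow_im_pos {v : ℂ} (hv : 0 < v.im) {ρ : ℝ} (h0 : 0 < ρ) (h1 : ρ ≤ 1) :
    0 < (v ^ ((ρ:ℝ):ℂ)).im := by
  have hv0 : v ≠ 0 := by intro h; rw [h] at hv; simp at hv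
  rw [Complex.cpow_def_of_ne_zero hv0, Complex.exp_im]
  apply mul_pos (Real.exp_pos _)
  have him : (Complex.log v * ((ρ:ℝ):ℂ)).im = Complex.arg v * ρ := by
    simp [Complex.mul_im, Complex.log_im]
  rw [him]
  obtain ⟨ha1, ha2⟩ := argBounds hv
  apply Real.sin_pos_of_pos_of_lt_pi
  · positivity
  · nlinarith

lemma spiral_arg {v : ℂ} (hv : 0 < v.im) {ρ : ℝ} (h0 : 0 < ρ) (h1 : ρ ≤ 1) :
    Complex.arg (v ^ ((ρ:ℝ):ℂ) - 1) ≤ Complex.arg (v - 1) := by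
  apply argle ?_ ?_ (spiral hv h0 h1)
  · have := cpow_im_pos hv h0 h1
    simpa using this
  · simpa using hv

lemma conj_cpow_real {v : ℂ} (hv : v.im ≠ 0) (ρ : ℝ) :
    (starRingEnd ℂ) v ^ ((ρ:ℝ):ℂ) = (starRingEnd ℂ) (v ^ ((ρ:ℝ):ℂ)) := by
  have harg : Complex.arg v ≠ π := by
    intro h; exact hv (Complex.arg_eq_pi_iff.mp h).2
  rw [Complex.conj_cpow _ _ harg, Complex.conj_ofReal]

lemma cpow_im_neg {v : ℂ} (hv : v.im < 0) {ρ : ℝ} (h0 : 0 < ρ) (h1 : ρ ≤ 1) :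
    (v ^ ((ρ:ℝ):ℂ)).im < 0 := by
  have hcv : 0 < ((starRingEnd ℂ) v).im := by simpa using hv
  have := cpow_im_pos hcv h0 h1
  rw [conj_cpow_real (by simpa using hv.ne : v.im ≠ 0)] at this
  simp at this
  linarith

lemma spiral_arg_neg {v : ℂ} (hv : v.im < 0) {ρ : ℝ} (h0 : 0 < ρ) (h1 : ρ ≤ 1) :
    Complex.arg (v - 1) ≤ Complex.arg (v ^ ((ρ:ℝ):ℂ) - 1) := by
  set u := (starRingEnd ℂ) v with hu
  have hui : 0 < u.im := by rw [hu]; simpa using hv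
  have h1' := spiral_arg hui h0 h1
  have e1 : u ^ ((ρ:ℝ):ℂ) - 1 = (starRingEnd ℂ) (v ^ ((ρ:ℝ):ℂ) - 1) := by
    rw [hu, conj_cpow_real (by simpa using hv.ne : v.im ≠ 0)]
    rw [map_sub, map_one]
  have e2 : u - 1 = (starRingEnd ℂ) (v - 1) := by rw [hu, map_sub, map_one]
  rw [e1, e2] at h1'
  rw [argConj, argConj] at h1'
  · linarith
  · simpa using hv.ne
  · have := cpow_im_neg hv h0 h1
    simpa using this.ne

/-- The power with the branch of the logarithm whose imaginary part lies in
`(0,2π)` (branch (1) of the paper), defined on `ℂ ∖ [0,∞)`. -/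
noncomputable def cpow1 (z w : ℂ) : ℂ :=
  Complex.exp (w * (Complex.log (-z) + Real.pi * Complex.I))

/-- The argument of `z` taken in `(0, 2π]`: `arg₁ z = arg(-z) + π`. -/
noncomputable def arg1 (z : ℂ) : ℝ := Complex.arg (-z) + Real.pi

lemma arg1_polar {c β : ℝ} (hc : 0 < c) (h1 : 0 < β) (h2 : β ≤ 2*π) :
    arg1 ((c:ℂ) * Complex.exp ((β:ℂ) * I)) = β := by
  unfold arg1
  have he : -((c:ℂ) * Complex.exp ((β:ℂ) * I)) = (c:ℂ) * Complex.exp ((((β - π : ℝ)):ℂ) * I) := by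
    push_cast
    rw [sub_mul, Complex.exp_sub, Complex.exp_pi_mul_I]
    field_simp
  rw [he, polar_arg hc (by linarith) (by linarith)]
  ring

lemma arg1_div {y s : ℂ} (hy : y ≠ 0) (hs : s ≠ 0)
    (h1 : Complex.arg s < arg1 y) (h2 : arg1 y - Complex.arg s ≤ 2*π) :
    arg1 (y / s) = arg1 y - Complex.arg s := by
  have hny : ((‖-y‖ / ‖s‖ : ℝ):ℂ)
      * Complex.exp ((((Complex.arg (-y) - Complex.arg s : ℝ)):ℂ) * I) = -(y/s) := by
    push_cast
    rw [sub_mul, Complex.exp_sub, div_mul_div_comm, Complex.norm_mul_exp_arg_mul_I,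
      Complex.norm_mul_exp_arg_mul_I, neg_div]
  have hc : 0 < ‖-y‖ / ‖s‖ := by
    apply div_pos <;> simp [norm_pos_iff, hy, hs]
  have harg1y : arg1 y = Complex.arg (-y) + π := rfl
  unfold arg1
  rw [← hny, polar_arg hc ?_ ?_]
  · rw [harg1y] at *; ring
  · rw [harg1y] at h1; linarith
  · rw [harg1y] at h2; linarith


/-- under the admissibility condition on `(α, s)`
(`(1-α)π ≤ arg s ≤ π` if `α ≤ 1`; `0 ≤ arg s ≤ (2-α)π` if `α > 1`), for every
`r ≥ 1` the function `z ↦ (1 - (1 - s(-1/z)^α)^{1/r})/s` maps the upper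
half-plane into the open sector `{w ≠ 0 : 0 < arg w < απ}` (argument measured in
`(0,2π]`). -/
theorem stmt16 (α : ℝ) (hα0 : 0 < α) (hα2 : α ≤ 2)
    (s : ℂ) (hs : s ≠ 0)
    (hadm1 : α ≤ 1 → (1 - α) * π ≤ Complex.arg s ∧ Complex.arg s ≤ π)
    (hadm2 : 1 < α → 0 ≤ Complex.arg s ∧ Complex.arg s ≤ (2 - α) * π)
    (r : ℝ) (hr : 1 ≤ r)
    (w : ℂ → ℂ)
    (hw : ∀ z : ℂ, w z = (1 - (1 - s * cpow1 (-1/z) (α : ℂ)) ^ ((1/r : ℂ))) / s) :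
    ∀ z : ℂ, 0 < z.im →
      w z ≠ 0 ∧ 0 < arg1 (w z) ∧ arg1 (w z) < α * π := by
  intro z hz
  have hπ := Real.pi_pos
  set σ := Complex.arg s with hσdef
  have hσ0 : 0 ≤ σ := by
    rcases le_or_gt α 1 with h | h
    · have := (hadm1 h).1; nlinarith
    · exact (hadm2 h).1
  have hσπ : σ ≤ π := by
    rcases le_or_gt α 1 with h | h
    · exact (hadm1 h).2
    · have := (hadm2 h).2; nlinarith
  have hπσα : π ≤ σ + α*π := by
    rcases le_or_gt α 1 with h | h
    · have := (hadm1 h).1; nlinarith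
    · have := (hadm2 h).1; nlinarith
  have hσ2π : σ + α*π ≤ 2*π := by
    rcases le_or_gt α 1 with h | h
    · have := (hadm1 h).2; nlinarith
    · have := (hadm2 h).2; nlinarith
  have hz0 : z ≠ 0 := by intro h; rw [h] at hz; simp at hz
  have hinv : (1/z).im < 0 := by
    rw [one_div, Complex.inv_im]
    have h1 : 0 < Complex.normSq z := Complex.normSq_pos.mpr hz0
    apply div_neg_of_neg_of_pos (by linarith) h1
  set θ := Complex.arg (1/z) + π with hθdef
  have hθ1 : 0 < θ := by
    have := Complex.neg_pi_lt_arg (1/z); rw [hθdef]; linarith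
  have hθ2 : θ < π := by
    have := Complex.arg_neg_iff.mpr hinv; rw [hθdef]; linarith
  set C := ‖s‖ * Real.exp (α * Real.log (‖1/z‖)) with hCdef
  have hC : 0 < C := mul_pos (norm_pos_iff.mpr hs) (Real.exp_pos _)
  set φ := σ + α*θ with hφdef
  have hφ1 : 0 < φ := by nlinarith
  have hφσ : σ < φ := by nlinarith
  have hφσα : φ < σ + α*π := by nlinarith
  have hφ2 : φ < 2*π := by nlinarith
  have hxu : s * cpow1 (-1/z) (α : ℝ) = ((C:ℝ):ℂ) * Complex.exp (((φ:ℝ):ℂ) * I) := by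
    unfold cpow1
    have h1 : -(-1/z) = 1/z := by ring
    rw [h1]
    have h2 : ((α:ℝ):ℂ) * (Complex.log (1/z) + (π:ℝ) * I)
        = ((α * Real.log (‖1/z‖) : ℝ):ℂ) + ((α*θ : ℝ):ℂ) * I := by
      apply Complex.ext
      · simp [Complex.log_re]
      · simp [Complex.log_im, hθdef]
        try ring
    rw [h2, Complex.exp_add]
    nth_rewrite 1 [← Complex.norm_mul_exp_arg_mul_I s]
    rw [← Complex.ofReal_exp, hCdef, hφdef]
    push_cast
    rw [add_mul, Complex.exp_add]
    ring
  set ρ := 1/r with hρdef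
  have hr0 : (0:ℝ) < r := lt_of_lt_of_le one_pos hr
  have hρ0 : 0 < ρ := by rw [hρdef]; positivity
  have hρ1 : ρ ≤ 1 := by rw [hρdef]; rw [div_le_one hr0]; exact hr
  set v := 1 - ((C:ℝ):ℂ) * Complex.exp (((φ:ℝ):ℂ) * I) with hvdef
  set t := v ^ ((ρ:ℝ):ℂ) with htdef
  have hwz : w z = (1 - t)/s := by
    rw [hw z, hxu, htdef, hvdef]
    norm_num
    rw [show ((r:ℂ))⁻¹ = ((ρ:ℝ):ℂ) by rw [hρdef]; push_cast; ring]
  have hvim : v.im = -(C * Real.sin φ) := by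
    rw [hvdef]
    simp [polar_im]
  have hv1 : v - 1 = ((C:ℝ):ℂ) * Complex.exp (((φ - π : ℝ):ℂ) * I) := by
    rw [hvdef]
    push_cast
    rw [sub_mul, Complex.exp_sub, Complex.exp_pi_mul_I]
    field_simp
    ring
  rcases lt_trichotomy φ π with hcφ | hcφ | hcφ
  · -- φ < π
    have hsin : 0 < Real.sin φ := Real.sin_pos_of_pos_of_lt_pi hφ1 hcφ
    have hvimneg : v.im < 0 := by rw [hvim]; nlinarith
    have htim : t.im < 0 := cpow_im_neg hvimneg hρ0 hρ1
    have hargv1 : Complex.arg (v - 1) = φ - π := by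
      rw [hv1]; exact polar_arg hC (by linarith) (by linarith)
    have hsp : φ - π ≤ Complex.arg (t - 1) := by
      rw [← hargv1]; exact spiral_arg_neg hvimneg hρ0 hρ1
    have ht1im : (t - 1).im < 0 := by simpa using htim
    have hargt1a : Complex.arg (t - 1) < 0 := Complex.arg_neg_iff.mpr ht1im
    have hargt1b : -π < Complex.arg (t - 1) := Complex.neg_pi_lt_arg _
    have hy0 : 1 - t ≠ 0 := by
      intro h
      have : (1 - t).im = 0 := by rw [h]; simp
      simp at this; simp [this] at htim
    have harg1y : arg1 (1 - t) = Complex.arg (t - 1) + π := by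
      unfold arg1; rw [neg_sub]
    rw [hwz]
    have hd : arg1 ((1 - t)/s) = arg1 (1 - t) - σ := by
      apply arg1_div hy0 hs
      · rw [harg1y]; linarith
      · rw [harg1y]; linarith
    refine ⟨div_ne_zero hy0 hs, ?_, ?_⟩
    · rw [hd, harg1y]; linarith
    · rw [hd, harg1y]; linarith
  · -- φ = π
    have hvval : v = ((1+C : ℝ):ℂ) := by
      rw [hvdef, hcφ, Complex.exp_pi_mul_I]
      push_cast; ring
    have hgt1 : 1 < (1+C) ^ ρ :=
      (Real.one_lt_rpow_iff_of_pos (by linarith)).mpr (Or.inl ⟨by linarith, hρ0⟩)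
    have htval : t = (((1+C) ^ ρ : ℝ):ℂ) := by
      rw [htdef, hvval, Complex.ofReal_cpow (by linarith : (0:ℝ) ≤ 1+C)]
    have hy0 : 1 - t ≠ 0 := by
      rw [htval]
      intro h
      have : ((1:ℂ) - ((((1+C) ^ ρ : ℝ)):ℂ)).re = 0 := by rw [h]; simp
      simp at this; linarith
    have harg1y : arg1 (1 - t) = π := by
      unfold arg1
      rw [neg_sub, htval, show ((((1+C) ^ ρ : ℝ)):ℂ) - 1 = ((((1+C) ^ ρ - 1: ℝ)):ℂ) by push_cast; ring]
      rw [Complex.arg_ofReal_of_nonneg (by linarith)]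
      ring
    rw [hwz]
    have hd : arg1 ((1 - t)/s) = arg1 (1 - t) - σ := by
      apply arg1_div hy0 hs
      · rw [harg1y]; linarith
      · rw [harg1y]; linarith
    refine ⟨div_ne_zero hy0 hs, ?_, ?_⟩
    · rw [hd, harg1y]; linarith
    · rw [hd, harg1y]
      have hsum : σ + α*θ = π := by rw [← hφdef]; exact hcφ
      have hprod : α*θ < α*π := mul_lt_mul_of_pos_left hθ2 hα0
      linarith
  · -- π < φ
    have hsin : Real.sin φ < 0 := by
      have := Real.sin_neg_of_neg_of_neg_pi_lt (show φ - 2*π < 0 by linarith)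
        (show -π < φ - 2*π by linarith)
      rw [Real.sin_sub_two_pi] at this
      exact this
    have hvimpos : 0 < v.im := by rw [hvim]; nlinarith
    have htim : 0 < t.im := cpow_im_pos hvimpos hρ0 hρ1
    have hargv1 : Complex.arg (v - 1) = φ - π := by
      rw [hv1]; exact polar_arg hC (by linarith) (by linarith)
    have hsp : Complex.arg (t - 1) ≤ φ - π := by
      rw [← hargv1]; exact spiral_arg hvimpos hρ0 hρ1
    have ht1im : 0 < (t - 1).im := by simpa using htim
    obtain ⟨hargt1a, hargt1b⟩ := argBounds ht1im
    have hy0 : 1 - t ≠ 0 := by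
      intro h
      have : (1 - t).im = 0 := by rw [h]; simp
      simp at this; simp [this] at htim
    have harg1y : arg1 (1 - t) = Complex.arg (t - 1) + π := by
      unfold arg1; rw [neg_sub]
    rw [hwz]
    have hd : arg1 ((1 - t)/s) = arg1 (1 - t) - σ := by
      apply arg1_div hy0 hs
      · rw [harg1y]; linarith
      · rw [harg1y]; linarith
    refine ⟨div_ne_zero hy0 hs, ?_, ?_⟩
    · rw [hd, harg1y]; linarith
    · rw [hd, harg1y]; linarith
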